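/- Define g : ℕ → ℝ by g(0) = 0, g(1) = 1, g(2) = 11/6, and g(t) = 2 - 4/6^t for t ≥ 3. Then for every real θ > 0, the sequence m ↦ ∑_{t=0}^{m} (choose m t)·(θ/m)^t·(1 - θ/m)^{m-t}·g(t) converges, as m → ∞, to 2 + (exp(-θ)/36)·(72 - 144·exp(θ/6) - 12θ - θ²). -/

import Mathlib

open Filter Finset Real

/-- Poisson limit of the Binomial expectation of
`g(0)=0, g(1)=1, g(2)=11/6, g(t)=2-4/6^t (t ≥ 3)`: for `θ > 0`,
`∑_{t=0}^{m} C(m,t)(θ/m)^t(1-θ/m)^{m-t} g(t)` converges to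
`2 + (e^{-θ}/36)(72 - 144e^{θ/6} - 12θ - θ²)` as `m → ∞`. -/
theorem stmt_15 (θ : ℝ) (hθ : 0 < θ) (g : ℕ → ℝ)
    (hg0 : g 0 = 0) (hg1 : g 1 = 1) (hg2 : g 2 = 11 / 6)
    (hg : ∀ t : ℕ, 3 ≤ t → g t = 2 - 4 / (6 : ℝ) ^ t) :
    Filter.Tendsto
      (fun m : ℕ => ∑ t ∈ Finset.range (m + 1),
        (m.choose t : ℝ) * (θ / m) ^ t * (1 - θ / m) ^ (m - t) * g t)
      Filter.atTop
      (nhds (2 + (Real.exp (-θ) / 36) *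
        (72 - 144 * Real.exp (θ / 6) - 12 * θ - θ ^ 2))) := by
  set F : ℕ → ℝ := fun m => 2 - 4 * (1 + (-(5 * θ / 6)) / m) ^ m
      + 2 * (1 + (-θ) / m) ^ m
      - (θ / 3) * ((1 + (-θ) / m) ^ m * (1 - θ / m)⁻¹)
      - (θ ^ 2 / 36) * (1 - 1 / (m : ℝ)) *
        ((1 + (-θ) / m) ^ m * ((1 - θ / m)⁻¹) ^ 2) with hF
  have hFlim : Tendsto F atTop (nhds (2 + (Real.exp (-θ) / 36) *
      (72 - 144 * Real.exp (θ / 6) - 12 * θ - θ ^ 2))) := by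
    have ha := Real.tendsto_one_add_div_pow_exp (-(5 * θ / 6))
    have hb := Real.tendsto_one_add_div_pow_exp (-θ)
    have hc : Tendsto (fun m : ℕ => (1 - θ / m)⁻¹) atTop (nhds 1) := by
      have : Tendsto (fun m : ℕ => 1 - θ / m) atTop (nhds 1) := by
        simpa using (tendsto_const_div_atTop_nhds_zero_nat θ).const_sub 1
      simpa using this.inv₀ one_ne_zero
    have hd : Tendsto (fun m : ℕ => 1 - 1 / (m : ℝ)) atTop (nhds 1) := by
      simpa using (tendsto_const_div_atTop_nhds_zero_nat (1 : ℝ)).const_sub (1 : ℝ)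
    have := (((ha.const_mul 4).const_sub 2).add (hb.const_mul 2)).sub
        (((hb.mul hc)).const_mul (θ / 3)) |>.sub
        (((hd.mul (hb.mul (hc.pow 2)))).const_mul (θ ^ 2 / 36))
    have heq : 2 - 4 * Real.exp (-(5 * θ / 6)) + 2 * Real.exp (-θ)
        - (θ / 3) * (Real.exp (-θ) * 1)
        - (θ ^ 2 / 36) * (1 * (Real.exp (-θ) * 1 ^ 2))
        = 2 + (Real.exp (-θ) / 36) *
          (72 - 144 * Real.exp (θ / 6) - 12 * θ - θ ^ 2) := by
      rw [show -(5 * θ / 6) = -θ + θ / 6 by ring, Real.exp_add]; ring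
    rw [← heq]
    convert this using 2 with m
    ring
  refine hFlim.congr' ?_
  filter_upwards [eventually_gt_atTop (max 2 ⌈θ⌉₊)] with m hm
  have hm2 : 2 < m := lt_of_le_of_lt (le_max_left _ _) hm
  have hmθ : θ < m := lt_of_le_of_lt (Nat.le_ceil θ)
    (by exact_mod_cast lt_of_le_of_lt (le_max_right _ _) hm)
  have hm0 : (0 : ℝ) < m := lt_trans hθ hmθ
  set p : ℝ := θ / m with hp
  set q : ℝ := 1 - θ / m with hq
  have hq0 : 0 < q := by
    rw [hq]; have : θ / m < 1 := (div_lt_one hm0).2 hmθ; linarith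
  have hqne : q ≠ 0 := ne_of_gt hq0
  set w : ℕ → ℝ := fun t => (m.choose t : ℝ) * p ^ t * q ^ (m - t) with hw
  set h : ℕ → ℝ := fun t => 2 - 4 / (6 : ℝ) ^ t with hh
  -- split sum
  have hsplit : ∑ t ∈ Finset.range (m + 1), w t * g t
      = (∑ t ∈ Finset.range (m + 1), w t * h t)
        + ∑ t ∈ Finset.range (m + 1), w t * (g t - h t) := by
    rw [← Finset.sum_add_distrib]; apply Finset.sum_congr rfl; intro t _; ring
  -- binomial identities
  have hbin : ∀ x y : ℝ, ∑ t ∈ Finset.range (m + 1),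
      (m.choose t : ℝ) * x ^ t * y ^ (m - t) = (x + y) ^ m := by
    intro x y
    rw [add_pow]
    apply Finset.sum_congr rfl; intro t _; ring
  have h1 : ∑ t ∈ Finset.range (m + 1), w t * h t
      = 2 - 4 * (1 + (-(5 * θ / 6)) / m) ^ m := by
    have e1 : ∑ t ∈ Finset.range (m + 1), w t * h t
        = 2 * (∑ t ∈ Finset.range (m + 1), (m.choose t : ℝ) * p ^ t * q ^ (m - t))
          - 4 * (∑ t ∈ Finset.range (m + 1),
            (m.choose t : ℝ) * (p / 6) ^ t * q ^ (m - t)) := by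
      rw [Finset.mul_sum, Finset.mul_sum, ← Finset.sum_sub_distrib]
      apply Finset.sum_congr rfl; intro t _
      rw [hw, hh]
      have h6 : (6 : ℝ) ^ t ≠ 0 := by positivity
      field_simp
      have h16 : ((1:ℝ)/6)^t * 6^t = 1 := by rw [← mul_pow]; norm_num
      linear_combination (↑(m.choose t) * p ^ t * 4) * h16
    rw [e1, hbin, hbin]
    have : p + q = 1 := by rw [hp, hq]; ring
    have h56 : p / 6 + q = 1 + (-(5 * θ / 6)) / m := by
      rw [hp, hq]; field_simp; ring
    rw [this, one_pow, h56]
    try ring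
  -- correction sum
  have h2 : ∑ t ∈ Finset.range (m + 1), w t * (g t - h t)
      = ∑ t ∈ Finset.range 3, w t * (g t - h t) := by
    symm
    apply Finset.sum_subset
    · intro t ht
      simp only [Finset.mem_range] at ht ⊢; omega
    · intro t _ ht
      simp only [Finset.mem_range, not_lt] at ht
      rw [hg t ht, hh]; ring
  have hw0 : w 0 = q ^ m := by simp [hw]
  have hw1 : w 1 = θ * (q ^ m * q⁻¹) := by
    rw [hw]
    simp only [Nat.choose_one_right, pow_one]
    rw [pow_sub₀ q hqne (by omega : 1 ≤ m), pow_one, hp]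
    field_simp
  have hw2 : w 2 = (θ ^ 2 / 2) * (1 - 1 / (m : ℝ)) * (q ^ m * (q⁻¹) ^ 2) := by
    show (m.choose 2 : ℝ) * p ^ 2 * q ^ (m - 2) = _
    rw [pow_sub₀ q hqne (by omega : 2 ≤ m), Nat.cast_choose_two, hp,
      inv_pow]
    field_simp
  have h3 : ∑ t ∈ Finset.range 3, w t * (g t - h t)
      = 2 * q ^ m - (θ / 3) * (q ^ m * q⁻¹)
        - (θ ^ 2 / 36) * (1 - 1 / (m : ℝ)) * (q ^ m * (q⁻¹) ^ 2) := by
    rw [Finset.sum_range_succ, Finset.sum_range_succ, Finset.sum_range_one,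
      hw0, hw1, hw2, hg0, hg1, hg2, hh]
    norm_num
    ring
  have hqeq : q = 1 + (-θ) / m := by rw [hq]; ring
  show F m = ∑ t ∈ Finset.range (m + 1), w t * g t
  rw [hsplit, h1, h2, h3]
  simp only [hF]
  rw [hqeq]
  ring
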